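/- For (λ,μ) ∈ ℂ^2 ∖ {(0,0)}, let J_{(λ:μ)} ⊂ ℂ[x0,...,x8] be the ideal generated by the monomials x_i x_{i+2} (i ∈ ℤ/9), x_i x_{i+3} x_{i+6} (i ∈ ℤ/9), together with the nine trinomials λ·x_{i+4}x_{i+7}^2 − μ·x_{i+3}x_{i+7}x_{i+8} + λ·x_{i+2}x_{i+8}^2 (i ∈ ℤ/9), indices mod 9. Then the common zero locus of J_{(λ:μ)} in ℂ^9 equals the union ⋃_{i ∈ ℤ/9} Q_i, where Q_i = {x ∈ ℂ^9 : x_i = x_{i+1} = x_{i+4} = x_{i+5} = x_{i+8} = 0 and λ·x_{i+3}x_{i+6} = μ·x_{i+2}x_{i+7}} (indices mod 9); i.e. set-theoretically the scheme X_{(λ:μ)} defined by J_{(λ:μ)} is the union of the nine quadric surfaces σ^i(Q_0), where Q_0 = L_0 ∩ {λx_3x_6 − μx_2x_7 = 0} and L_0 = {x0 = x1 = x4 = x5 = x8 = 0}. -/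

import Mathlib

open MvPolynomial

/-- The ideal `J_{(λ:μ)} ⊂ ℂ[x0,…,x8]` generated by the monomials `x_i x_{i+2}`,
`x_i x_{i+3} x_{i+6}` and the trinomials
`λ·x_{i+4}x_{i+7}² − μ·x_{i+3}x_{i+7}x_{i+8} + λ·x_{i+2}x_{i+8}²` (indices mod 9). -/
noncomputable def idealJlm (l μ : ℂ) : Ideal (MvPolynomial (Fin 9) ℂ) :=
  Ideal.span
    ((Set.range fun i : Fin 9 => X i * X (i + 2)) ∪
     (Set.range fun i : Fin 9 => X i * X (i + 3) * X (i + 6)) ∪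
     (Set.range fun i : Fin 9 =>
       C l * (X (i + 4) * X (i + 7) ^ 2) - C μ * (X (i + 3) * X (i + 7) * X (i + 8))
         + C l * (X (i + 2) * X (i + 8) ^ 2)))

/-- For `(λ,μ) ≠ (0,0)`, the zero locus of `J_{(λ:μ)}` in `ℂ⁹` is the union of the
nine quadric cones `Q_i = {x_i = x_{i+1} = x_{i+4} = x_{i+5} = x_{i+8} = 0,
λx_{i+3}x_{i+6} = μx_{i+2}x_{i+7}}` (indices mod 9); i.e. set-theoretically
`X_{(λ:μ)}` is the union of the nine quadric surfaces `σ^i(Q₀) ⊂ P⁸`. -/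
theorem zeroLocus_Jlm (l μ : ℂ) (h : (l, μ) ≠ (0, 0)) :
    {x : Fin 9 → ℂ | ∀ f ∈ idealJlm l μ, eval x f = 0} =
      ⋃ i : Fin 9,
        {x : Fin 9 → ℂ |
          x i = 0 ∧ x (i + 1) = 0 ∧ x (i + 4) = 0 ∧ x (i + 5) = 0 ∧ x (i + 8) = 0 ∧
          l * (x (i + 3) * x (i + 6)) = μ * (x (i + 2) * x (i + 7))} := by
  ext x
  simp only [Set.mem_setOf_eq, Set.mem_iUnion]
  constructor
  · intro hx
    have hq : ∀ k : Fin 9, x k * x (k + 2) = 0 := by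
      intro k
      have hm : (X k * X (k + 2) : MvPolynomial (Fin 9) ℂ) ∈ idealJlm l μ :=
        Ideal.subset_span (Or.inl (Or.inl ⟨k, rfl⟩))
      simpa using hx _ hm
    have hc : ∀ k : Fin 9, x k * x (k + 3) * x (k + 6) = 0 := by
      intro k
      have hm : (X k * X (k + 3) * X (k + 6) : MvPolynomial (Fin 9) ℂ) ∈ idealJlm l μ :=
        Ideal.subset_span (Or.inl (Or.inr ⟨k, rfl⟩))
      simpa using hx _ hm
    have ht : ∀ k : Fin 9, l * (x (k + 4) * x (k + 7) ^ 2)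
        - μ * (x (k + 3) * x (k + 7) * x (k + 8)) + l * (x (k + 2) * x (k + 8) ^ 2) = 0 := by
      intro k
      have hm : (C l * (X (k + 4) * X (k + 7) ^ 2) - C μ * (X (k + 3) * X (k + 7) * X (k + 8))
          + C l * (X (k + 2) * X (k + 8) ^ 2) : MvPolynomial (Fin 9) ℂ) ∈ idealJlm l μ :=
        Ideal.subset_span (Or.inr ⟨k, rfl⟩)
      have := hx _ hm
      simp only [map_add, map_sub, map_mul, map_pow, eval_C, eval_X] at this
      exact this
    by_cases hall : ∀ k, x k = 0
    · exact ⟨0, by simp [hall]⟩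
    push_neg at hall
    obtain ⟨a, ha⟩ := hall
    have h2 : x (a + 2) = 0 := (mul_eq_zero.mp (hq a)).resolve_left ha
    have h7 : x (a + 7) = 0 := by
      have hk := hq (a + 7)
      simp only [add_assoc, Fin.reduceAdd, add_zero] at hk
      exact (mul_eq_zero.mp hk).resolve_right ha
    by_cases h3 : x (a + 3) = 0
    · by_cases h6 : x (a + 6) = 0
      · by_cases h1 : x (a + 1) = 0
        · by_cases h8 : x (a + 8) = 0
          · by_cases h4 : x (a + 4) = 0
            · -- support ⊆ {a, a+5} : use i = a + 3
              refine ⟨a + 3, ?_⟩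
              simp only [add_assoc, Fin.reduceAdd, add_zero]
              exact ⟨h3, h4, h7, h8, h2, by rw [h6, h1]; ring⟩
            · -- x(a+4) ≠ 0 : use i = a + 7
              have key := ht (a + 6)
              simp only [add_assoc, Fin.reduceAdd, add_zero] at key
              have h5 : μ * (x a * x (a + 5)) = 0 := by
                apply mul_left_cancel₀ h4
                linear_combination -key + l * x (a + 4) ^ 2 * h1 + l * x (a + 5) ^ 2 * h8
              refine ⟨a + 7, ?_⟩
              simp only [add_assoc, Fin.reduceAdd, add_zero]
              exact ⟨h7, h8, h2, h3, h6, by rw [h1, h5]; ring⟩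
          · -- x(a+8) ≠ 0 : use i = a + 2
            have key := ht (a + 1)
            simp only [add_assoc, Fin.reduceAdd, add_zero] at key
            have hrel : l * (x (a + 5) * x (a + 8)) = μ * (x (a + 4) * x a) := by
              apply mul_left_cancel₀ h8
              linear_combination key - l * x a ^ 2 * h3
            refine ⟨a + 2, ?_⟩
            simp only [add_assoc, Fin.reduceAdd, add_zero]
            exact ⟨h2, h3, h6, h7, h1, hrel⟩
        · -- x(a+1) ≠ 0 : use i = a + 7
          have h8' : x (a + 8) = 0 := by
            have hk := hq (a + 8)
            simp only [add_assoc, Fin.reduceAdd, add_zero] at hk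
            exact (mul_eq_zero.mp hk).resolve_right h1
          have key := ht (a + 2)
          simp only [add_assoc, Fin.reduceAdd, add_zero] at key
          have hrel : l * (x (a + 1) * x (a + 4)) = μ * (x a * x (a + 5)) := by
            apply mul_left_cancel₀ h1
            linear_combination key - l * x a ^ 2 * h6
          refine ⟨a + 7, ?_⟩
          simp only [add_assoc, Fin.reduceAdd, add_zero]
          exact ⟨h7, h8', h2, h3, h6, hrel⟩
      · -- x(a+6) ≠ 0 : use i = a + 3
        have h4' : x (a + 4) = 0 := by
          have hk := hq (a + 4)
          simp only [add_assoc, Fin.reduceAdd, add_zero] at hk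
          exact (mul_eq_zero.mp hk).resolve_right h6
        have h8' : x (a + 8) = 0 := by
          have hk := hq (a + 6)
          simp only [add_assoc, Fin.reduceAdd, add_zero] at hk
          exact (mul_eq_zero.mp hk).resolve_left h6
        have key := ht (a + 7)
        simp only [add_assoc, Fin.reduceAdd, add_zero] at key
        have hrel : l * (x (a + 6) * x a) = μ * (x (a + 5) * x (a + 1)) := by
          apply mul_left_cancel₀ h6
          linear_combination key - l * x (a + 5) ^ 2 * h2
        refine ⟨a + 3, ?_⟩
        simp only [add_assoc, Fin.reduceAdd, add_zero]
        exact ⟨h3, h4', h7, h8', h2, hrel⟩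
    · -- x(a+3) ≠ 0 : use i = a + 6
      have h1' : x (a + 1) = 0 := by
        have hk := hq (a + 1)
        simp only [add_assoc, Fin.reduceAdd, add_zero] at hk
        exact (mul_eq_zero.mp hk).resolve_right h3
      have h5' : x (a + 5) = 0 := by
        have hk := hq (a + 3)
        simp only [add_assoc, Fin.reduceAdd, add_zero] at hk
        exact (mul_eq_zero.mp hk).resolve_left h3
      have h6' : x (a + 6) = 0 :=
        (mul_eq_zero.mp (hc a)).resolve_left (mul_ne_zero ha h3)
      have key := ht (a + 1)
      simp only [add_assoc, Fin.reduceAdd, add_zero] at key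
      have hrel : l * (x a * x (a + 3)) = μ * (x (a + 8) * x (a + 4)) := by
        apply mul_left_cancel₀ ha
        linear_combination key - l * x (a + 8) ^ 2 * h5'
      refine ⟨a + 6, ?_⟩
      simp only [add_assoc, Fin.reduceAdd, add_zero]
      exact ⟨h6', h7, h1', h2, h5', hrel⟩
  · rintro ⟨i, h0, h1, h4, h5, h8, hrel⟩ f hf
    have hker : idealJlm l μ ≤ RingHom.ker (eval x) := by
      rw [idealJlm, Ideal.span_le]
      rintro g hg
      simp only [Set.mem_union, Set.mem_range] at hg
      have hmem : ∀ p : MvPolynomial (Fin 9) ℂ, eval x p = 0 → p ∈ (RingHom.ker (eval x) :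
          Ideal (MvPolynomial (Fin 9) ℂ)) := fun p hp => hp
      rcases hg with (⟨k, rfl⟩ | ⟨k, rfl⟩) | ⟨k, rfl⟩ <;>
      · apply hmem
        obtain ⟨d, rfl⟩ : ∃ d, k = i + d := ⟨k - i, by abel⟩
        simp only [map_add, map_sub, map_mul, map_pow, eval_C, eval_X]
        have hd : d = 0 ∨ d = 1 ∨ d = 2 ∨ d = 3 ∨ d = 4 ∨ d = 5 ∨ d = 6 ∨ d = 7 ∨ d = 8 := by
          omega
        rcases hd with rfl | rfl | rfl | rfl | rfl | rfl | rfl | rfl | rfl <;>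
          simp only [add_assoc, Fin.reduceAdd, add_zero, Fin.isValue] <;>
          first
            | linear_combination x (i + 3) * hrel + l * x (i + 2) ^ 2 * h8
            | linear_combination x (i + 6) * hrel + l * x (i + 7) ^ 2 * h1
            | simp [h0, h1, h4, h5, h8]
    exact hker hf
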